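/- Let P(x) = ∑_α c_α x^α ∈ ℤ[x₁,…,xₙ] be a polynomial with no constant term (the sum over multi-indexes α ∈ supp(P)). Suppose there exists a prime p such that: (1) the congruence ∑_{α∈supp(P)} c_α z^{|α|} ≡ 0 (mod p) has no solution z ≢ 0 (mod p); and (2) for every Rado set J of minimal indexes of P, the congruence ∑_{α∈J} c_α z^{|α|} ≡ 0 (mod p) has no solution z ≢ 0 (mod p). Then P is not partition regular on ℕ except possibly for constant solutions: there exists a finite partition of ℕ such that every monochromatic tuple (a₁,…,aₙ) with P(a₁,…,aₙ) = 0 satisfies a₁ = … = aₙ. -/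

import Mathlib

/- `ℕ+` plays the role of the paper's `ℕ` (the positive integers).
Multi-indexes of `P ∈ ℤ[x₁,…,xₙ]` are elements of `Fin n →₀ ℕ`. -/

/-- The length `|α| = ∑ᵢ αᵢ` of a multi-index. -/
def mdeg {n : ℕ} (α : Fin n →₀ ℕ) : ℕ := ∑ i, α i

/-- `α` is a minimal multi-index of `P`: it lies in the support and no strictly
smaller (componentwise) multi-index does. -/
def IsMinimalIndex {n : ℕ} (P : MvPolynomial (Fin n) ℤ) (α : Fin n →₀ ℕ) : Prop :=
  α ∈ P.support ∧ ¬∃ β ∈ P.support, β < α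

/-- `J` is a Rado set of indexes of `P`: a nonempty subset of the support such
that any two of its elements have equal coordinate-sums over some nonempty set
`Λ` of coordinates. -/
def IsRadoSet {n : ℕ} (P : MvPolynomial (Fin n) ℤ) (J : Finset (Fin n →₀ ℕ)) : Prop :=
  J.Nonempty ∧ J ⊆ P.support ∧
    ∀ α ∈ J, ∀ β ∈ J, ∃ Λ : Finset (Fin n), Λ.Nonempty ∧
      ∑ i ∈ Λ, α i = ∑ i ∈ Λ, β i

/-- Suppose `P` has no constant term and for some prime `p`:
(1) `∑_{α ∈ supp P} c_α z^{|α|} ≡ 0 (mod p)` has no solution `z ≢ 0`, and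
(2) for every Rado set `J` of minimal indexes, `∑_{α∈J} c_α z^{|α|} ≡ 0 (mod p)`
has no solution `z ≢ 0`. Then `P` is not partition regular on `ℕ` except
possibly for constant solutions. -/
theorem not_pr_of_mod_p_conditions {n : ℕ} (P : MvPolynomial (Fin n) ℤ)
    (hP0 : MvPolynomial.constantCoeff P = 0)
    (p : ℕ) (hp : p.Prime)
    (h1 : ∀ z : ZMod p, z ≠ 0 →
      ∑ α ∈ P.support, (((P.coeff α : ℤ) : ZMod p) * z ^ mdeg α) ≠ 0)
    (h2 : ∀ J : Finset (Fin n →₀ ℕ), IsRadoSet P J →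
      (∀ α ∈ J, IsMinimalIndex P α) →
      ∀ z : ZMod p, z ≠ 0 →
        ∑ α ∈ J, (((P.coeff α : ℤ) : ZMod p) * z ^ mdeg α) ≠ 0) :
    ∃ (r : ℕ) (C : ℕ+ → Fin r), ∀ a : Fin n → ℕ+,
      (∀ i j, C (a i) = C (a j)) →
      MvPolynomial.eval (fun i => ((a i : ℕ) : ℤ)) P = 0 →
      ∀ i j, a i = a j := by
  classical
  haveI hfp : Fact p.Prime := ⟨hp⟩
  haveI : NeZero p := ⟨hp.ne_zero⟩
  rcases Nat.eq_zero_or_pos n with hn | hn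
  · subst hn
    exact ⟨1, fun _ => 0, fun a _ _ i j => i.elim0⟩
  by_cases hSe : P.support = ∅
  · exact absurd (by simp [hSe]) (h1 1 one_ne_zero)
  have hSne : P.support.Nonempty := Finset.nonempty_of_ne_empty hSe
  obtain ⟨L, hLge, hLp⟩ := Nat.exists_infinite_primes (P.totalDegree + 2)
  haveI hfL : Fact L.Prime := ⟨hLp⟩
  have hLpos : 0 < L := hLp.pos
  have hmdeg_lt : ∀ α ∈ P.support, mdeg α < L := by
    intro α hα
    have h1' : (α.sum fun _ e => e) ≤ P.totalDegree := MvPolynomial.le_totalDegree hα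
    have h2' : (α.sum fun _ e => e) = mdeg α := Finsupp.sum_fintype _ _ (fun _ => rfl)
    omega
  set cls : ℕ → ℕ := fun u => (u / L ^ (u.factorization L)) % L with hclsdef
  have hcls_lt : ∀ u, cls u < L := fun u => Nat.mod_lt _ hLpos
  have hcls_zero : cls 0 = 0 := by simp [hclsdef]
  have hcls_ne : ∀ u, u ≠ 0 → cls u ≠ 0 := by
    intro u hu h0
    exact Nat.not_dvd_ordCompl hLp hu (Nat.dvd_of_mod_eq_zero h0)
  set col : ℕ+ → ZMod p × Fin L := fun a =>
    ( (((a : ℕ) / p ^ ((a : ℕ).factorization p) : ℕ) : ZMod p),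
      ⟨cls ((a : ℕ).factorization p), hcls_lt _⟩ ) with hcoldef
  refine ⟨Fintype.card (ZMod p × Fin L),
    fun a => (Fintype.equivFin (ZMod p × Fin L)) (col a), ?_⟩
  intro a hmono heval
  exfalso
  have hcol : ∀ i j, col (a i) = col (a j) :=
    fun i j => (Fintype.equivFin (ZMod p × Fin L)).injective (hmono i j)
  set v : Fin n → ℕ := fun i => ((a i : ℕ)).factorization p with hvdef
  set b : Fin n → ℕ := fun i => (a i : ℕ) / p ^ v i with hbdef
  have hane : ∀ i, (a i : ℕ) ≠ 0 := fun i => (a i).pos.ne'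
  have hab : ∀ i, (a i : ℕ) = p ^ v i * b i :=
    fun i => (Nat.ordProj_mul_ordCompl_eq_self _ p).symm
  have hpb : ∀ i, ¬ p ∣ b i := fun i => Nat.not_dvd_ordCompl hp (hane i)
  set i₀ : Fin n := ⟨0, hn⟩ with hi0def
  set z : ZMod p := ((b i₀ : ℕ) : ZMod p) with hzdef
  have hbz : ∀ i, ((b i : ℕ) : ZMod p) = z := by
    intro i
    have := congrArg Prod.fst (hcol i i₀)
    simpa [hcoldef] using this
  have hclseq : ∀ i, cls (v i) = cls (v i₀) := by
    intro i
    have := congrArg (fun x => (Prod.snd x).val) (hcol i i₀)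
    simpa [hcoldef] using this
  have hz0 : z ≠ 0 := by
    intro h
    exact hpb i₀ ((ZMod.natCast_eq_zero_iff ..).mp h)
  set w : (Fin n →₀ ℕ) → ℕ := fun α => ∑ i, α i * v i with hwdef
  set m : ℕ := (P.support.image w).min' (hSne.image w) with hmdef
  have hmle : ∀ α ∈ P.support, m ≤ w α :=
    fun α hα => Finset.min'_le _ _ (Finset.mem_image_of_mem w hα)
  have hmmem : ∃ α ∈ P.support, w α = m := by
    have h := (P.support.image w).min'_mem (hSne.image w)
    rw [Finset.mem_image] at h
    obtain ⟨α, hα, hαm⟩ := h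
    exact ⟨α, hα, hαm⟩
  have heval' : ∑ α ∈ P.support,
      P.coeff α * ((p : ℤ) ^ (w α) * ∏ i, (b i : ℤ) ^ (α i)) = 0 := by
    rw [MvPolynomial.eval_eq'] at heval
    rw [← heval]
    refine Finset.sum_congr rfl (fun α hα => ?_)
    congr 1
    have hcast : ∀ i, ((a i : ℕ) : ℤ) = (p : ℤ) ^ v i * (b i : ℤ) := by
      intro i; rw [hab i]; push_cast; ring
    have : ∏ i, ((a i : ℕ) : ℤ) ^ α i
        = (p : ℤ) ^ (w α) * ∏ i, (b i : ℤ) ^ α i := by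
      calc ∏ i, ((a i : ℕ) : ℤ) ^ α i
          = ∏ i, ((p : ℤ) ^ (α i * v i) * (b i : ℤ) ^ α i) := by
            refine Finset.prod_congr rfl (fun i _ => ?_)
            rw [hcast i, mul_pow, ← pow_mul, mul_comm (v i) (α i)]
        _ = (p : ℤ) ^ (w α) * ∏ i, (b i : ℤ) ^ α i := by
            rw [Finset.prod_mul_distrib, Finset.prod_pow_eq_pow_sum]
    exact this.symm
  have hpZ : ((p : ℤ)) ≠ 0 := by exact_mod_cast hp.ne_zero
  have hdiv : ∑ α ∈ P.support,
      P.coeff α * ((p : ℤ) ^ (w α - m) * ∏ i, (b i : ℤ) ^ (α i)) = 0 := by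
    have hkey : (p : ℤ) ^ m * (∑ α ∈ P.support,
        P.coeff α * ((p : ℤ) ^ (w α - m) * ∏ i, (b i : ℤ) ^ (α i))) = 0 := by
      rw [Finset.mul_sum, ← heval']
      refine Finset.sum_congr rfl (fun α hα => ?_)
      have hadd : m + (w α - m) = w α := Nat.add_sub_cancel' (hmle α hα)
      have hpp : (p : ℤ) ^ (w α) = (p : ℤ) ^ m * (p : ℤ) ^ (w α - m) := by
        rw [← pow_add, hadd]
      rw [hpp]; ring
    rcases mul_eq_zero.mp hkey with h | h
    · exact absurd h (pow_ne_zero _ hpZ)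
    · exact h
  have hzmod : ∑ α ∈ P.support,
      ((P.coeff α : ℤ) : ZMod p) * ((p : ZMod p) ^ (w α - m)
        * ∏ i, ((b i : ℕ) : ZMod p) ^ (α i)) = 0 := by
    have h := congrArg (fun t : ℤ => ((t : ZMod p))) hdiv
    push_cast at h
    exact h
  set M : Finset (Fin n →₀ ℕ) := P.support.filter (fun α => w α = m) with hMdef
  have hMsum : ∑ α ∈ M, (((P.coeff α : ℤ) : ZMod p) * z ^ mdeg α) = 0 := by
    have hsplit : ∑ α ∈ M, (((P.coeff α : ℤ) : ZMod p) * z ^ mdeg α)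
        = ∑ α ∈ P.support, ((P.coeff α : ℤ) : ZMod p)
          * ((p : ZMod p) ^ (w α - m) * ∏ i, ((b i : ℕ) : ZMod p) ^ (α i)) := by
      rw [hMdef, Finset.sum_filter]
      refine Finset.sum_congr rfl (fun α hα => ?_)
      by_cases hwα : w α = m
      · rw [if_pos hwα, hwα, Nat.sub_self, pow_zero, one_mul]
        congr 1
        have hprod : ∏ i, ((b i : ℕ) : ZMod p) ^ α i = z ^ mdeg α := by
          calc ∏ i, ((b i : ℕ) : ZMod p) ^ α i
              = ∏ i, z ^ α i := Finset.prod_congr rfl (fun i _ => by rw [hbz i])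
            _ = z ^ ∑ i, α i := Finset.prod_pow_eq_pow_sum _ _ _
            _ = z ^ mdeg α := rfl
        exact hprod.symm
      · rw [if_neg hwα]
        have hne : w α - m ≠ 0 := by have := hmle α hα; omega
        rw [ZMod.natCast_self, zero_pow hne, zero_mul, mul_zero]
    rw [hsplit]
    exact hzmod
  by_cases hc0 : cls (v i₀) = 0
  · -- all valuations are zero: use condition (1)
    have hv0 : ∀ i, v i = 0 := by
      intro i
      by_contra hvi
      exact hcls_ne _ hvi ((hclseq i).trans hc0)
    have hw0 : ∀ α, w α = 0 :=
      fun α => Finset.sum_eq_zero (fun i _ => by rw [hv0 i, mul_zero])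
    have hm0 : m = 0 := by
      obtain ⟨α, _, hα⟩ := hmmem
      rw [← hα, hw0]
    have hMS : M = P.support :=
      Finset.filter_true_of_mem (fun α _ => by rw [hw0, hm0])
    exact h1 z hz0 (hMS ▸ hMsum)
  · -- all valuations positive: M is a Rado set of minimal indexes
    have hvpos : ∀ i, v i ≠ 0 := by
      intro i h0
      apply hc0
      rw [← hclseq i, h0, hcls_zero]
    have hMmin : ∀ α ∈ M, IsMinimalIndex P α := by
      intro α hα
      obtain ⟨hαS, hαm⟩ := Finset.mem_filter.mp hα
      refine ⟨hαS, ?_⟩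
      rintro ⟨β, hβS, hβlt⟩
      have hle : ∀ i, β i ≤ α i := Finsupp.le_def.mp hβlt.le
      have hne : β ≠ α := hβlt.ne
      have hex : ∃ j, β j < α j := by
        by_contra hno
        push_neg at hno
        exact hne (Finsupp.ext (fun i => le_antisymm (hle i) (hno i)))
      obtain ⟨j, hj⟩ := hex
      have hlt : w β < w α := by
        refine Finset.sum_lt_sum (fun i _ => Nat.mul_le_mul_right _ (hle i))
          ⟨j, Finset.mem_univ j, ?_⟩
        exact mul_lt_mul_of_pos_right hj (Nat.pos_of_ne_zero (hvpos j))
      have := hmle β hβS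
      omega
    have hMrado : IsRadoSet P M := by
      refine ⟨?_, Finset.filter_subset _ _, ?_⟩
      · obtain ⟨α, hα, hαm⟩ := hmmem
        exact ⟨α, Finset.mem_filter.mpr ⟨hα, hαm⟩⟩
      · intro α hα β hβ
        have hwαβ : w α = w β := by
          rw [(Finset.mem_filter.mp hα).2, (Finset.mem_filter.mp hβ).2]
        have huniv : (Finset.univ : Finset (Fin n)).Nonempty := ⟨i₀, Finset.mem_univ _⟩
        set kf : Fin n → ℕ := fun i => (v i).factorization L with hkfdef
        set k : ℕ := (Finset.univ.image kf).min'
          (huniv.image kf) with hkdef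
        have hkle : ∀ i, k ≤ kf i :=
          fun i => Finset.min'_le _ _ (Finset.mem_image_of_mem kf (Finset.mem_univ i))
        have hkmem : ∃ i, kf i = k := by
          have h := (Finset.univ.image kf).min'_mem (huniv.image kf)
          rw [Finset.mem_image] at h
          obtain ⟨i, _, hi⟩ := h
          exact ⟨i, hi⟩
        set Λ : Finset (Fin n) := Finset.univ.filter (fun i => kf i = k) with hΛdef
        have hΛne : Λ.Nonempty := by
          obtain ⟨i, hi⟩ := hkmem
          exact ⟨i, Finset.mem_filter.mpr ⟨Finset.mem_univ i, hi⟩⟩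
        refine ⟨Λ, hΛne, ?_⟩
        -- divide the weights by L^k
        have hdvd : ∀ i, L ^ k ∣ v i :=
          fun i => dvd_trans (pow_dvd_pow L (hkle i)) (Nat.ordProj_dvd (v i) L)
        set v' : Fin n → ℕ := fun i => v i / L ^ k with hv'def
        have hvv' : ∀ i, v i = L ^ k * v' i :=
          fun i => (Nat.mul_div_cancel' (hdvd i)).symm
        have hsum' : ∑ i, α i * v' i = ∑ i, β i * v' i := by
          have hmul : L ^ k * (∑ i, α i * v' i) = L ^ k * (∑ i, β i * v' i) := by
            rw [Finset.mul_sum, Finset.mul_sum]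
            have e1 : ∀ γ : Fin n →₀ ℕ,
                (∑ i, L ^ k * (γ i * v' i)) = w γ := by
              intro γ
              refine Finset.sum_congr rfl (fun i _ => ?_)
              rw [hvv' i]; ring
            rw [e1 α, e1 β, hwαβ]
          exact Nat.eq_of_mul_eq_mul_left (pow_pos hLpos k) hmul
        -- pass to ZMod L
        set c : ℕ := cls (v i₀) with hcdef
        have hmodΛ : ∀ i ∈ Λ, ((v' i : ℕ) : ZMod L) = (c : ZMod L) := by
          intro i hi
          have hik : kf i = k := (Finset.mem_filter.mp hi).2
          have : v' i % L = c := by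
            rw [hv'def]
            simp only
            rw [← hik]
            exact hclseq i
          rw [← ZMod.natCast_mod (v' i) L, this]
        have hmodc : ∀ i ∉ Λ, ((v' i : ℕ) : ZMod L) = 0 := by
          intro i hi
          have hik : kf i ≠ k := by
            intro h
            exact hi (Finset.mem_filter.mpr ⟨Finset.mem_univ i, h⟩)
          have hklt : k + 1 ≤ kf i := by
            have := hkle i; omega
          have hdvd2 : L ∣ v' i := by
            rw [hv'def]
            simp only
            rw [Nat.dvd_div_iff_mul_dvd (hdvd i)]
            calc L ^ k * L = L ^ (k + 1) := by rw [pow_succ]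
              _ ∣ L ^ (kf i) := pow_dvd_pow L hklt
              _ ∣ v i := Nat.ordProj_dvd (v i) L
          exact (ZMod.natCast_eq_zero_iff ..).mpr hdvd2
        have hkeyZ : ∀ γ : Fin n →₀ ℕ,
            ((∑ i, γ i * v' i : ℕ) : ZMod L)
              = ((∑ i ∈ Λ, γ i : ℕ) : ZMod L) * (c : ZMod L) := by
          intro γ
          push_cast
          rw [← Finset.sum_filter_add_sum_filter_not Finset.univ (fun i => kf i = k)
            (fun i => (γ i : ZMod L) * ((v' i : ℕ) : ZMod L))]
          have hz2 : ∑ i ∈ Finset.univ.filter (fun i => ¬ kf i = k),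
              (γ i : ZMod L) * ((v' i : ℕ) : ZMod L) = 0 := by
            refine Finset.sum_eq_zero (fun i hi => ?_)
            have : i ∉ Λ := by
              intro hmem
              exact (Finset.mem_filter.mp hi).2 (Finset.mem_filter.mp hmem).2
            rw [hmodc i this, mul_zero]
          rw [hz2, add_zero, Finset.sum_mul]
          exact Finset.sum_congr rfl (fun i hi => by rw [hmodΛ i hi])
        have hcancel : ((∑ i ∈ Λ, α i : ℕ) : ZMod L) = ((∑ i ∈ Λ, β i : ℕ) : ZMod L) := by
          have hcne : (c : ZMod L) ≠ 0 := by
            intro h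
            have hdc : L ∣ c := (ZMod.natCast_eq_zero_iff ..).mp h
            have := Nat.eq_zero_of_dvd_of_lt hdc (hcls_lt (v i₀))
            exact hc0 this
          have h := hkeyZ α
          rw [hsum', hkeyZ β] at h
          exact (mul_right_cancel₀ hcne h).symm
        -- both sums are < L, so they are equal
        have hbound : ∀ γ : Fin n →₀ ℕ, γ ∈ P.support → (∑ i ∈ Λ, γ i) < L := by
          intro γ hγ
          have h1' : (∑ i ∈ Λ, γ i) ≤ ∑ i, γ i :=
            Finset.sum_le_sum_of_subset (Finset.filter_subset _ _)
          have := hmdeg_lt γ hγ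
          have h2' : mdeg γ = ∑ i, γ i := rfl
          omega
        have hmodeq := (ZMod.natCast_eq_natCast_iff _ _ _).mp hcancel
        have hα' : (∑ i ∈ Λ, α i) < L := hbound α (Finset.mem_filter.mp hα).1
        have hβ' : (∑ i ∈ Λ, β i) < L := hbound β (Finset.mem_filter.mp hβ).1
        calc ∑ i ∈ Λ, α i = (∑ i ∈ Λ, α i) % L := (Nat.mod_eq_of_lt hα').symm
          _ = (∑ i ∈ Λ, β i) % L := hmodeq
          _ = ∑ i ∈ Λ, β i := Nat.mod_eq_of_lt hβ'
    exact h2 M hMrado hMmin z hz0 hMsum
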